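/- arXiv:hep-th/9810027 — 4 statements merged into one kernel-verified Lean document; each statement's English description precedes it below -/
import Mathlib

section
/- The dressed scaling dimension Δ(Δ₀) = (√(1-D+24Δ₀) - √(1-D))/(√(25-D) - √(1-D)) (for fixed D < 1, Δ₀ ≥ 0) satisfies Δ(0) = 0 and Δ(1) = 1, is strictly increasing and strictly concave in Δ₀ on [0,∞), and satisfies Δ(Δ₀) → Δ₀ pointwise as D → -∞. -/
open Real Filter Topology

/-- Properties of the KPZ dressed scaling dimension
`Δ(D,Δ₀) = (√(1-D+24Δ₀) - √(1-D))/(√(25-D) - √(1-D))` for `D < 1`: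
`Δ(0) = 0`, `Δ(1) = 1`, strict monotonicity and strict concavity in `Δ₀` on `[0,∞)`,
and the classical limit `Δ(D,Δ₀) → Δ₀` as `D → -∞`. -/
theorem stmt7 (Δ : ℝ → ℝ → ℝ)
    (hΔ : ∀ D Δ₀ : ℝ, Δ D Δ₀ =
      (Real.sqrt (1-D+24*Δ₀) - Real.sqrt (1-D)) /
      (Real.sqrt (25-D) - Real.sqrt (1-D))) :
    (∀ D < (1:ℝ), Δ D 0 = 0 ∧ Δ D 1 = 1 ∧
      StrictMonoOn (Δ D) (Set.Ici 0) ∧ StrictConcaveOn ℝ (Set.Ici 0) (Δ D)) ∧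
    (∀ Δ₀ ≥ (0:ℝ), Tendsto (fun D => Δ D Δ₀) atBot (𝓝 Δ₀)) := by
  constructor
  · intro D hD
    have hb0 : (0:ℝ) < 1 - D := by linarith
    have hden : Real.sqrt (1-D) < Real.sqrt (25-D) :=
      Real.sqrt_lt_sqrt hb0.le (by linarith)
    have hd : (0:ℝ) < Real.sqrt (25-D) - Real.sqrt (1-D) := by linarith
    refine ⟨?_, ?_, ?_, ?_⟩
    · rw [hΔ]; norm_num
    · rw [hΔ]
      have : 1 - D + 24 * 1 = 25 - D := by ring
      rw [this, div_self hd.ne']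
    · intro x hx y hy hxy
      simp only [Set.mem_Ici] at hx hy
      rw [hΔ, hΔ]
      have hxa : (0:ℝ) ≤ 1 - D + 24 * x := by linarith
      have hsq : Real.sqrt (1-D+24*x) < Real.sqrt (1-D+24*y) :=
        Real.sqrt_lt_sqrt hxa (by linarith)
      gcongr
    · refine ⟨convex_Ici 0, ?_⟩
      intro x hx y hy hxy a b ha hb hab
      simp only [Set.mem_Ici] at hx hy
      simp only [hΔ, smul_eq_mul]
      set X := 1 - D + 24 * x with hX
      set Y := 1 - D + 24 * y with hY
      have hX0 : (0:ℝ) ≤ X := by simp only [hX]; linarith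
      have hY0 : (0:ℝ) ≤ Y := by simp only [hY]; linarith
      have hne : X ≠ Y := by
        intro h; apply hxy
        have : x = y := by simp only [hX, hY] at h; linarith
        exact this
      have key := Real.strictConcaveOn_sqrt.2 (Set.mem_Ici.2 hX0) (Set.mem_Ici.2 hY0)
        hne ha hb hab
      simp only [smul_eq_mul] at key
      have harg : 1 - D + 24 * (a * x + b * y) = a * X + b * Y := by
        simp only [hX, hY]; linear_combination (D - 1) * hab
      rw [harg]
      have heq : a * ((Real.sqrt X - Real.sqrt (1-D)) / (Real.sqrt (25-D) - Real.sqrt (1-D)))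
          + b * ((Real.sqrt Y - Real.sqrt (1-D)) / (Real.sqrt (25-D) - Real.sqrt (1-D)))
          = (a * Real.sqrt X + b * Real.sqrt Y - Real.sqrt (1-D)) /
            (Real.sqrt (25-D) - Real.sqrt (1-D)) := by
        rw [← mul_div_assoc, ← mul_div_assoc, ← add_div]
        congr 1
        linear_combination (-Real.sqrt (1-D)) * hab
      rw [heq]
      gcongr
  · intro Δ₀ hΔ₀
    have h1D : Tendsto (fun D : ℝ => 1 - D) atBot atTop := by
      have h := (tendsto_atTop_add_const_left _ 1 tendsto_neg_atBot_atTop :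
        Tendsto (fun D : ℝ => 1 + -D) atBot atTop)
      simpa only [← sub_eq_add_neg] using h
    have hinv : Tendsto (fun D : ℝ => (1 - D)⁻¹) atBot (𝓝 0) :=
      tendsto_inv_atTop_zero.comp h1D
    have h24 : Tendsto (fun D : ℝ => 1 + 24 / (1 - D)) atBot (𝓝 1) := by
      have := hinv.const_mul (24:ℝ)
      simpa [div_eq_mul_inv] using tendsto_const_nhds.add this
    have h24Δ : Tendsto (fun D : ℝ => 1 + 24 * Δ₀ / (1 - D)) atBot (𝓝 1) := by
      have := hinv.const_mul (24 * Δ₀)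
      simpa [div_eq_mul_inv] using tendsto_const_nhds.add this
    have hs1 : Tendsto (fun D : ℝ => Real.sqrt (1 + 24 / (1 - D)) + 1) atBot (𝓝 2) := by
      have := ((Real.continuous_sqrt.tendsto 1).comp h24).add_const 1
      norm_num at this
      convert this using 2
    have hs2 : Tendsto (fun D : ℝ => Real.sqrt (1 + 24 * Δ₀ / (1 - D)) + 1) atBot (𝓝 2) := by
      have := ((Real.continuous_sqrt.tendsto 1).comp h24Δ).add_const 1
      norm_num at this
      convert this using 2
    have hlim : Tendsto (fun D : ℝ => Δ₀ * ((Real.sqrt (1 + 24 / (1 - D)) + 1) /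
        (Real.sqrt (1 + 24 * Δ₀ / (1 - D)) + 1))) atBot (𝓝 Δ₀) := by
      have := (hs1.div hs2 (by norm_num)).const_mul Δ₀
      simpa using this
    refine Tendsto.congr' ?_ hlim
    filter_upwards [eventually_lt_atBot (1:ℝ)] with D hD
    have hb0 : (0:ℝ) < 1 - D := by linarith
    have ha0 : (0:ℝ) ≤ 1 - D + 24 * Δ₀ := by linarith
    have hc0 : (0:ℝ) < 25 - D := by linarith
    set sa := Real.sqrt (1 - D + 24 * Δ₀) with hsa
    set sb := Real.sqrt (1 - D) with hsb
    set sc := Real.sqrt (25 - D) with hsc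
    have hsb0 : 0 < sb := Real.sqrt_pos.2 hb0
    have hsa0 : 0 ≤ sa := Real.sqrt_nonneg _
    have hsc0 : 0 < sc := Real.sqrt_pos.2 hc0
    have hbc : sb < sc := Real.sqrt_lt_sqrt hb0.le (by linarith)
    have hsa2 : sa ^ 2 = 1 - D + 24 * Δ₀ := Real.sq_sqrt ha0
    have hsb2 : sb ^ 2 = 1 - D := Real.sq_sqrt hb0.le
    have hsc2 : sc ^ 2 = 25 - D := Real.sq_sqrt hc0.le
    have e1 : 1 + 24 / (1 - D) = (25 - D) / (1 - D) := by field_simp; ring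
    have e2 : 1 + 24 * Δ₀ / (1 - D) = (1 - D + 24 * Δ₀) / (1 - D) := by field_simp
    have e3 : Real.sqrt (1 + 24 / (1 - D)) = sc / sb := by
      rw [e1, Real.sqrt_div hc0.le]
    have e4 : Real.sqrt (1 + 24 * Δ₀ / (1 - D)) = sa / sb := by
      rw [e2, Real.sqrt_div ha0]
    have f1 : sa - sb = 24 * Δ₀ / (sa + sb) := by
      rw [eq_div_iff (by positivity)]
      nlinarith [hsa2, hsb2]
    have f2 : sc - sb = 24 / (sc + sb) := by
      rw [eq_div_iff (by positivity)]
      nlinarith [hsc2, hsb2]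
    rw [hΔ, ← hsa, ← hsb, ← hsc, e3, e4, f1, f2]
    have hab : (0:ℝ) < sa + sb := by positivity
    have hcb : (0:ℝ) < sc + sb := by positivity
    field_simp
end

section
/- Branched polymer criticality: let f : ℕ → ℝ≥0 with f(n) > 0 for all n ≥ 2 (and suitable growth so that F(G) := (1 + Σ_{n≥2} f(n)G^{n-1})/G has positive finite radius of convergence), and suppose the self-consistency equation e^μ = F(G) defines G(μ) for μ > μ_c as the smaller positive root. If G_c > 0 is a point where F'(G_c) = 0 and F''(G_c) > 0, then setting μ_c = log F(G_c), one has G(μ) = G_c - C·(μ-μ_c)^{1/2}·(1 + o(1)) as μ → μ_c⁺ with C = √(2F(G_c)/F''(G_c)); in particular the one-point function exponent is γ = 1/2. -/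
open Real Filter Topology

/-- Branched polymer criticality: if `F` is `C²` near a nondegenerate interior
minimum `G_c > 0` with `F(G_c) > 0`, `F'(G_c) = 0`, `F''(G_c) > 0`, and `G(μ)`
solves `e^μ = F(G(μ))` with `G(μ) < G_c` and `G(μ) → G_c` as `μ → μ_c⁺` where
`μ_c = log F(G_c)`, then `G_c - G(μ) ~ √(2F(G_c)/F''(G_c)) · (μ-μ_c)^(1/2)`,
so the susceptibility exponent is `γ = 1/2`. -/
theorem stmt12 (F G : ℝ → ℝ) (Gc μc : ℝ)
    (hGc : 0 < Gc) (hFGc : 0 < F Gc)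
    (hF : ContDiffAt ℝ 2 F Gc)
    (hF1 : deriv F Gc = 0)
    (hF2 : 0 < iteratedDeriv 2 F Gc)
    (hμc : μc = Real.log (F Gc))
    (hG : ∀ᶠ μ in 𝓝[>] μc, Real.exp μ = F (G μ) ∧ 0 < G μ ∧ G μ < Gc)
    (hGlim : Tendsto G (𝓝[>] μc) (𝓝 Gc)) :
    Tendsto (fun μ => (Gc - G μ) / Real.sqrt (μ - μc)) (𝓝[>] μc)
      (𝓝 (Real.sqrt (2 * F Gc / iteratedDeriv 2 F Gc))) := by
  set A := iteratedDeriv 2 F Gc with hAdef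
  have hexpμc : Real.exp μc = F Gc := by rw [hμc, Real.exp_log hFGc]
  -- an open set where F is C²
  obtain ⟨u, hu, hFu⟩ := hF.contDiffOn le_rfl (by simp)
  obtain ⟨s, hsu, hso, hGs⟩ := mem_nhds_iff.1 hu
  have hFs : ContDiffOn ℝ 2 F s := hFu.mono hsu
  have hdFs : ContDiffOn ℝ 1 (deriv F) s := hFs.deriv_of_isOpen hso (by norm_num)
  have hderiv2 : HasDerivAt (deriv F) A Gc := by
    have h1 : DifferentiableAt ℝ (deriv F) Gc :=
      (hdFs.differentiableOn one_ne_zero Gc hGs).differentiableAt (hso.mem_nhds hGs)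
    have h2 := h1.hasDerivAt
    have h3 : A = deriv (deriv F) Gc := by
      rw [hAdef, iteratedDeriv_succ, iteratedDeriv_one]
    rwa [← h3] at h2
  have hApos : (0:ℝ) < A := hF2
  -- the key Peano-type limit via L'Hôpital
  have t1 : Tendsto (fun x => deriv F x / (x - Gc)) (𝓝[≠] Gc) (𝓝 A) := by
    have h := hasDerivAt_iff_tendsto_slope.mp hderiv2
    refine h.congr fun x => ?_
    simp [slope_def_field, hF1]
  have t2 : Tendsto (fun x => deriv F x / (2 * (x - Gc))) (𝓝[<] Gc) (𝓝 (A / 2)) := by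
    have hmono : 𝓝[<] Gc ≤ 𝓝[≠] Gc :=
      nhdsWithin_mono _ (fun x hx => by simpa using ne_of_lt hx)
    have h := (t1.mono_left hmono).div_const 2
    refine h.congr fun x => ?_
    rw [div_div, mul_comm]
  have hdg : ∀ x : ℝ, deriv (fun y => (y - Gc) ^ 2) x = 2 * (x - Gc) := by
    intro x
    have : HasDerivAt (fun y : ℝ => (y - Gc) ^ 2) (2 * (x - Gc) ^ 1 * 1) x := by
      simpa [Pi.pow_def] using (((hasDerivAt_id x).sub_const Gc).pow 2)
    simpa using this.deriv
  have key : Tendsto (fun x => (F x - F Gc) / (x - Gc) ^ 2) (𝓝[<] Gc) (𝓝 (A / 2)) := by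
    have hsev : ∀ᶠ x in 𝓝[<] Gc, x ∈ s :=
      eventually_nhdsWithin_of_eventually_nhds (eventually_mem_nhds_iff.mpr
        (hso.mem_nhds hGs) |>.mono fun x hx => mem_of_mem_nhds hx)
    apply deriv.lhopital_zero_nhdsLT (f := fun x => F x - F Gc)
      (g := fun y => (y - Gc) ^ 2)
    · filter_upwards [hsev] with x hx
      exact ((hFs.differentiableOn two_ne_zero x hx).differentiableAt
        (hso.mem_nhds hx)).sub_const _
    · filter_upwards [self_mem_nhdsWithin] with x hx
      rw [hdg x]
      have : x - Gc ≠ 0 := sub_ne_zero.mpr (ne_of_lt hx)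
      positivity
    · have := (hF.continuousAt.tendsto).mono_left (nhdsWithin_le_nhds (s := Set.Iio Gc))
      simpa using this.sub_const (F Gc)
    · have : Tendsto (fun x : ℝ => (x - Gc) ^ 2) (𝓝 Gc) (𝓝 ((Gc - Gc) ^ 2)) := by
        exact ((continuous_id.sub continuous_const).pow 2).tendsto Gc
      simpa using this.mono_left (nhdsWithin_le_nhds (s := Set.Iio Gc))
    · refine t2.congr fun x => ?_
      rw [hdg x, deriv_sub_const]
  -- transfer through G
  have hGtend : Tendsto G (𝓝[>] μc) (𝓝[<] Gc) :=
    tendsto_nhdsWithin_of_tendsto_nhds_of_eventually_within G hGlim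
      (hG.mono fun μ h => h.2.2)
  have keyG : Tendsto (fun μ => (Real.exp μ - F Gc) / (Gc - G μ) ^ 2) (𝓝[>] μc)
      (𝓝 (A / 2)) := by
    refine (key.comp hGtend).congr' ?_
    filter_upwards [hG] with μ ⟨h1, _, _⟩
    simp only [Function.comp]
    rw [h1]
    ring_nf
  -- derivative of exp at μc
  have hexp : Tendsto (fun μ => (Real.exp μ - F Gc) / (μ - μc)) (𝓝[>] μc) (𝓝 (F Gc)) := by
    have h := hasDerivAt_iff_tendsto_slope.mp (Real.hasDerivAt_exp μc)
    have hmono : 𝓝[>] μc ≤ 𝓝[≠] μc :=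
      nhdsWithin_mono _ (fun x hx => by simpa using ne_of_gt hx)
    have h2 := h.mono_left hmono
    rw [hexpμc] at h2
    refine h2.congr fun μ => ?_
    simp [slope_def_field, hexpμc]
  -- the squared ratio
  have hratio : Tendsto (fun μ => (Gc - G μ) ^ 2 / (μ - μc)) (𝓝[>] μc)
      (𝓝 (2 * F Gc / A)) := by
    have hApos2 : (A / 2 : ℝ) ≠ 0 := by positivity
    have h := hexp.div keyG hApos2
    have hval : F Gc / (A / 2) = 2 * F Gc / A := by
      field_simp
    rw [hval] at h
    refine h.congr' ?_
    filter_upwards [hG, self_mem_nhdsWithin] with μ ⟨h1, _, h3⟩ (hμ : μc < μ)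
    have ha : Real.exp μ - F Gc ≠ 0 := by
      have : Real.exp μc < Real.exp μ := Real.exp_lt_exp.mpr hμ
      rw [hexpμc] at this
      exact ne_of_gt (sub_pos.mpr this)
    have hb : (Gc - G μ) ^ 2 ≠ 0 := by
      have : Gc - G μ ≠ 0 := sub_ne_zero.mpr (ne_of_gt h3)
      positivity
    have hc : μ - μc ≠ 0 := sub_ne_zero.mpr (ne_of_gt hμ)
    simp only [Pi.div_apply]
    field_simp
  -- take square roots
  have hsq := (Real.continuous_sqrt.tendsto _).comp hratio
  refine hsq.congr' ?_
  filter_upwards [hG, self_mem_nhdsWithin] with μ ⟨_, _, h3⟩ (hμ : μc < μ)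
  simp only [Function.comp]
  rw [Real.sqrt_div (by positivity), Real.sqrt_sq (le_of_lt (sub_pos.mpr h3))]
end

section
/- m-th multicritical branched polymers: if F is C^{m+1} near G_c with F^{(k)}(G_c)=0 for k=1,...,m-1, F^{(m)}(G_c) > 0, F(G_c) > 0, and G(μ) denotes the solution of e^μ = F(G) with G(μ) < G_c tending to G_c as μ → μ_c⁺ := log F(G_c)⁺, then G_c - G(μ) ~ C·(μ-μ_c)^{1/m} as μ → μ_c⁺, with C = (m!·F(G_c)/F^{(m)}(G_c))^{1/m}; hence γ = (m-1)/m. -/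
open Real Filter Topology

lemma contDiffAt_deriv' {f : ℝ → ℝ} {a : ℝ} {n : ℕ}
    (hf : ContDiffAt ℝ (n + 1) f a) : ContDiffAt ℝ n (deriv f) a := by
  obtain ⟨u, hu, hfu⟩ := hf.contDiffOn (le_refl _) (by simp)
  obtain ⟨ε, hε, hball⟩ := Metric.mem_nhds_iff.1 hu
  have h1 : ContDiffOn ℝ n (deriv f) (Metric.ball a ε) :=
    (hfu.mono hball).deriv_of_isOpen Metric.isOpen_ball (by norm_cast)
  exact h1.contDiffAt (Metric.ball_mem_nhds a hε)

lemma taylor_lim : ∀ (n : ℕ), 1 ≤ n → ∀ (f : ℝ → ℝ) (a : ℝ),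
    ContDiffAt ℝ n f a →
    (∀ k, 1 ≤ k → k ≤ n - 1 → iteratedDeriv k f a = 0) →
    Filter.Tendsto (fun x => (f x - f a) / (x - a) ^ n) (𝓝[≠] a)
      (𝓝 (iteratedDeriv n f a / n.factorial)) := by
  intro n
  induction n with
  | zero => intro h; omega
  | succ n IH => ?_
  intro _ f a hf hfk
  rcases Nat.eq_zero_or_pos n with rfl | hn
  case inl =>
    have hd : HasDerivAt f (deriv f a) a :=
      (hf.differentiableAt (by norm_cast)).hasDerivAt
    rw [hasDerivAt_iff_tendsto_slope] at hd
    simp only [zero_add, iteratedDeriv_one, Nat.factorial_one, Nat.cast_one, div_one, pow_one]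
    exact hd.congr (fun x => by rw [slope_def_field])
  case inr =>
    have IH' := IH hn
    have hfc : ContDiffAt ℝ ((n : WithTop ℕ∞) + 1) f a := by exact_mod_cast hf
    have hD : ContDiffAt ℝ n (deriv f) a := contDiffAt_deriv' hfc
    have hDk : ∀ k, 1 ≤ k → k ≤ n - 1 → iteratedDeriv k (deriv f) a = 0 := by
      intro k hk1 hk2
      rw [← iteratedDeriv_succ']
      exact hfk (k + 1) (by omega) (by omega)
    have hDa : deriv f a = 0 := by
      have := hfk 1 le_rfl (by omega)
      rwa [iteratedDeriv_one] at this
    have key := IH' (deriv f) a hD hDk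
    rw [← iteratedDeriv_succ'] at key
    -- L'Hopital
    have hdiff : ∀ᶠ x in 𝓝 a, DifferentiableAt ℝ f x := by
      filter_upwards [hfc.eventually (by simp)] with x hx
      exact hx.differentiableAt (by simp)
    apply HasDerivAt.lhopital_zero_nhdsNE
      (f' := fun x => deriv f x) (g' := fun x => (n + 1 : ℝ) * (x - a) ^ n)
    · filter_upwards [hdiff.filter_mono nhdsWithin_le_nhds] with x hx
      exact (hx.hasDerivAt).sub_const (f a)
    · refine Filter.Eventually.of_forall fun x => ?_
      have h := ((hasDerivAt_id x).sub_const a).fun_pow (n + 1)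
      simpa using h
    · filter_upwards [self_mem_nhdsWithin] with x hx
      have : x - a ≠ 0 := sub_ne_zero.2 hx
      positivity
    · have : Filter.Tendsto (fun x => f x - f a) (𝓝 a) (𝓝 (f a - f a)) :=
        (hf.continuousAt.tendsto).sub_const (f a)
      rw [sub_self] at this
      exact this.mono_left nhdsWithin_le_nhds
    · have : Filter.Tendsto (fun x : ℝ => (x - a) ^ (n + 1)) (𝓝 a) (𝓝 ((a - a) ^ (n + 1))) := by
        exact (continuous_id.sub continuous_const).pow (n+1) |>.tendsto a
      rw [sub_self, zero_pow (by omega)] at this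
      exact this.mono_left nhdsWithin_le_nhds
    · have h2 : Filter.Tendsto (fun x => (deriv f x - deriv f a) / (x - a) ^ n / (n + 1 : ℝ))
          (𝓝[≠] a) (𝓝 (iteratedDeriv (n + 1) f a / n.factorial / (n + 1 : ℝ))) :=
        key.div_const _
      have heq : ∀ x : ℝ, deriv f x / ((n + 1 : ℝ) * (x - a) ^ n)
          = (deriv f x - deriv f a) / (x - a) ^ n / (n + 1 : ℝ) := by
        intro x
        rw [hDa, sub_zero, div_div, mul_comm]
      have hval : iteratedDeriv (n + 1) f a / n.factorial / (n + 1 : ℝ)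
          = iteratedDeriv (n + 1) f a / (n + 1).factorial := by
        rw [Nat.factorial_succ, div_div]
        push_cast
        ring_nf
      rw [← hval]
      exact h2.congr fun x => (heq x).symm


/-- `m`-th multicritical branched polymers: if `F` is `C^(m+1)` near `G_c` with
`F^(k)(G_c) = 0` for `k = 1,…,m-1`, `F^(m)(G_c) > 0`, `F(G_c) > 0`, and `G(μ)`
solves `e^μ = F(G(μ))` with `G(μ) < G_c` and `G(μ) → G_c` as `μ → μ_c⁺` where
`μ_c = log F(G_c)`, then
`G_c - G(μ) ~ (m!·F(G_c)/F^(m)(G_c))^(1/m) · (μ-μ_c)^(1/m)`,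
so `γ = (m-1)/m`. -/
theorem stmt13 (m : ℕ) (hm : 2 ≤ m) (F G : ℝ → ℝ) (Gc μc : ℝ)
    (hGc : 0 < Gc) (hFGc : 0 < F Gc)
    (hF : ContDiffAt ℝ (m+1) F Gc)
    (hFk : ∀ k, 1 ≤ k → k ≤ m - 1 → iteratedDeriv k F Gc = 0)
    (hFm : 0 < iteratedDeriv m F Gc)
    (hμc : μc = Real.log (F Gc))
    (hG : ∀ᶠ μ in 𝓝[>] μc, Real.exp μ = F (G μ) ∧ G μ < Gc)
    (hGlim : Tendsto G (𝓝[>] μc) (𝓝 Gc)) :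
    Tendsto (fun μ => (Gc - G μ) / (μ - μc) ^ ((1:ℝ)/m)) (𝓝[>] μc)
      (𝓝 ((m.factorial * F Gc / iteratedDeriv m F Gc) ^ ((1:ℝ)/m))) := by
  have hm0 : (m : ℝ) ≠ 0 := by positivity
  set D := iteratedDeriv m F Gc with hD
  set c := D / m.factorial with hc
  have hcpos : 0 < c := by
    apply div_pos hFm
    exact_mod_cast m.factorial_pos
  -- Taylor limit for F at Gc
  have key0 : Tendsto (fun x => (F x - F Gc) / (x - Gc) ^ m) (𝓝[≠] Gc) (𝓝 c) :=
    taylor_lim m (by omega) F Gc (hF.of_le (by exact_mod_cast Nat.le_succ m)) hFk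
  -- G tends to Gc within the punctured neighborhood
  have hG' : Tendsto G (𝓝[>] μc) (𝓝[≠] Gc) := by
    rw [tendsto_nhdsWithin_iff]
    exact ⟨hGlim, hG.mono fun μ hμ => ne_of_lt hμ.2⟩
  have keyG : Tendsto (fun μ => (F (G μ) - F Gc) / (G μ - Gc) ^ m) (𝓝[>] μc) (𝓝 c) :=
    key0.comp hG'
  -- exponential slope
  have hexpc : Real.exp μc = F Gc := by rw [hμc, Real.exp_log hFGc]
  have texp : Tendsto (fun μ => (Real.exp μ - Real.exp μc) / (μ - μc)) (𝓝[>] μc)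
      (𝓝 (Real.exp μc)) := by
    have hd := Real.hasDerivAt_exp μc
    rw [hasDerivAt_iff_tendsto_slope] at hd
    have := hd.mono_left (nhdsWithin_mono μc fun x hx => ne_of_gt hx)
    exact this.congr fun x => by rw [slope_def_field]
  -- q μ := (F(Gμ) - F Gc)/(μ - μc) → exp μc
  have hq : Tendsto (fun μ => (F (G μ) - F Gc) / (μ - μc)) (𝓝[>] μc) (𝓝 (Real.exp μc)) := by
    apply texp.congr'
    filter_upwards [hG] with μ hμ
    rw [hμ.1, hexpc]
  -- ratio
  have hs' : Tendsto (fun μ => (G μ - Gc) ^ m / (μ - μc)) (𝓝[>] μc)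
      (𝓝 (Real.exp μc / c)) := by
    have h1 : Tendsto (fun μ => ((F (G μ) - F Gc) / (μ - μc)) /
        ((F (G μ) - F Gc) / (G μ - Gc) ^ m)) (𝓝[>] μc) (𝓝 (Real.exp μc / c)) :=
      hq.div keyG (ne_of_gt hcpos)
    apply h1.congr'
    have hev : ∀ᶠ μ in 𝓝[>] μc, 0 < (F (G μ) - F Gc) / (G μ - Gc) ^ m :=
      keyG.eventually (eventually_gt_nhds hcpos)
    filter_upwards [hev, hG, self_mem_nhdsWithin] with μ hμ1 hμ2 hμ3
    have ha : F (G μ) - F Gc ≠ 0 := by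
      intro h
      rw [h, zero_div] at hμ1
      exact lt_irrefl 0 hμ1
    have hb : μ - μc ≠ 0 := sub_ne_zero.2 (ne_of_gt hμ3)
    have hd' : (G μ - Gc) ^ m ≠ 0 := pow_ne_zero _ (sub_ne_zero.2 (ne_of_lt hμ2.2))
    field_simp
  have hLpos : 0 < Real.exp μc / c := div_pos (Real.exp_pos μc) hcpos
  -- m must be even
  have hmeven : Even m := by
    rcases Nat.even_or_odd m with h | h
    · exact h
    · exfalso
      have hev1 : ∀ᶠ μ in 𝓝[>] μc, 0 < (G μ - Gc) ^ m / (μ - μc) :=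
        hs'.eventually (eventually_gt_nhds hLpos)
      obtain ⟨μ, h1, h2, h3⟩ := (hev1.and (hG.and self_mem_nhdsWithin)).exists
      have hneg : (G μ - Gc) ^ m < 0 := h.pow_neg (sub_neg.2 h2.2)
      have : (G μ - Gc) ^ m / (μ - μc) < 0 :=
        div_neg_of_neg_of_pos hneg (sub_pos.2 h3)
      linarith
  have hs : Tendsto (fun μ => (Gc - G μ) ^ m / (μ - μc)) (𝓝[>] μc)
      (𝓝 (Real.exp μc / c)) := by
    apply hs'.congr
    intro μ
    rw [show Gc - G μ = -(G μ - Gc) by ring, hmeven.neg_pow]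
  -- compose with rpow
  have hcont : ContinuousAt (fun x : ℝ => x ^ ((1:ℝ)/m)) (Real.exp μc / c) :=
    Real.continuousAt_rpow_const _ _ (Or.inl (ne_of_gt hLpos))
  have hfinal := hcont.tendsto.comp hs
  have hLval : Real.exp μc / c = m.factorial * F Gc / D := by
    rw [hexpc, hc, div_div_eq_mul_div, mul_comm]
  rw [hLval] at hfinal
  apply hfinal.congr'
  filter_upwards [hG, self_mem_nhdsWithin] with μ h1 h2
  have hpos1 : (0:ℝ) ≤ Gc - G μ := (sub_pos.2 h1.2).le
  have hpos2 : (0:ℝ) ≤ μ - μc := (sub_pos.2 h2).le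
  show ((Gc - G μ) ^ m / (μ - μc)) ^ ((1:ℝ)/m) = (Gc - G μ) / (μ - μc) ^ ((1:ℝ)/m)
  rw [Real.div_rpow (by positivity) hpos2, ← Real.rpow_natCast (Gc - G μ) m,
    ← Real.rpow_mul hpos1, mul_one_div, div_self hm0, Real.rpow_one]
end

section
/- Appearance of spikes (single-vertex integral): for α < 3 - 1/N with N ≥ 1 and Λ > 0, the iterated integral ∫_Λ^∞ dl₁ l₁^{-Nα} ∫₀^{Λ/l₁}⋯∫₀^{Λ/l₁} (l_{N+1}⋯l_{2N})^{(2N-1)/N - α} dl_{N+1}⋯dl_{2N} is finite and equals a constant times ∫_Λ^∞ l₁^{1-3N} dl₁, which is finite; but the same integral with an extra factor l₁^n in the integrand diverges for every n ≥ 3N - 2. -/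
open Real MeasureTheory

/-- Appearance of spikes in 2d quantum Regge calculus: for a vertex of order `N`
and `α < 3 - 1/N`, the inner `N`-fold integral over the short links in
`(0, Λ/l₁)` of `(l_{N+1}⋯l_{2N})^((2N-1)/N - α)` equals
`((Λ/l₁)^(3-1/N-α)/(3-1/N-α))^N`; the full spike integral (with outer factor
`l₁^(-Nα)`) is finite on `(Λ,∞)`, but inserting `l₁^n` makes it divergent for
every `n ≥ 3N-2`, i.e. `⟨l₁^n⟩ = ∞`. -/
theorem stmt15 (N : ℕ) (hN : 1 ≤ N) (Λ α : ℝ) (hΛ : 0 < Λ)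
    (hα : α < 3 - 1/N) :
    (∀ l₁ : ℝ, 0 < l₁ →
      (∫ y in Set.univ.pi (fun _ : Fin N => Set.Ioo (0:ℝ) (Λ/l₁)),
          ∏ i, (y i) ^ ((2*(N:ℝ)-1)/N - α))
        = ((Λ/l₁) ^ (3 - 1/(N:ℝ) - α) / (3 - 1/(N:ℝ) - α)) ^ (N:ℕ)) ∧
    IntegrableOn
      (fun l₁ : ℝ => l₁ ^ (-(N:ℝ)*α) *
        ∫ y in Set.univ.pi (fun _ : Fin N => Set.Ioo (0:ℝ) (Λ/l₁)),
          ∏ i, (y i) ^ ((2*(N:ℝ)-1)/N - α))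
      (Set.Ioi Λ) ∧
    (∀ n : ℕ, 3*(N:ℝ) - 2 ≤ n →
      ¬ IntegrableOn
        (fun l₁ : ℝ => l₁ ^ (n:ℝ) * (l₁ ^ (-(N:ℝ)*α) *
          ∫ y in Set.univ.pi (fun _ : Fin N => Set.Ioo (0:ℝ) (Λ/l₁)),
            ∏ i, (y i) ^ ((2*(N:ℝ)-1)/N - α)))
        (Set.Ioi Λ)) := by
  have hN1 : (1:ℝ) ≤ (N:ℝ) := by exact_mod_cast hN
  have hNpos : (0:ℝ) < (N:ℝ) := by linarith
  have hN0 : (N:ℝ) ≠ 0 := ne_of_gt hNpos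
  set p : ℝ := (2*(N:ℝ)-1)/N - α with hp
  set q : ℝ := 3 - 1/(N:ℝ) - α with hqdef
  have hpq : p + 1 = q := by
    rw [hp, hqdef]; field_simp; ring
  have hqpos : 0 < q := by rw [hqdef]; linarith
  have hp1 : -1 < p := by linarith
  -- one-dimensional integral
  have h1 : ∀ c : ℝ, 0 < c → (∫ x in Set.Ioo (0:ℝ) c, x ^ p) = c ^ q / q := by
    intro c hc
    rw [← MeasureTheory.integral_Ioc_eq_integral_Ioo,
      ← intervalIntegral.integral_of_le hc.le, integral_rpow (Or.inl hp1),
      Real.zero_rpow (by linarith : p + 1 ≠ 0), hpq, sub_zero]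
  -- inner N-fold integral
  have hinner : ∀ c : ℝ, 0 < c →
      (∫ y in Set.univ.pi (fun _ : Fin N => Set.Ioo (0:ℝ) c),
        ∏ i, (y i) ^ p) = (c ^ q / q) ^ N := by
    intro c hc
    have hmeas : MeasurableSet (Set.univ.pi (fun _ : Fin N => Set.Ioo (0:ℝ) c)) :=
      MeasurableSet.univ_pi (fun _ => measurableSet_Ioo)
    rw [← MeasureTheory.integral_indicator hmeas]
    have heq : (Set.univ.pi (fun _ : Fin N => Set.Ioo (0:ℝ) c)).indicator
        (fun y : Fin N → ℝ => ∏ i, (y i) ^ p)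
        = fun y : Fin N → ℝ =>
          ∏ i, (Set.Ioo (0:ℝ) c).indicator (fun x => x ^ p) (y i) := by
      funext y
      by_cases h : y ∈ Set.univ.pi (fun _ : Fin N => Set.Ioo (0:ℝ) c)
      · rw [Set.indicator_of_mem h]
        exact Finset.prod_congr rfl fun i _ =>
          (Set.indicator_of_mem (h i (Set.mem_univ i)) (fun x => x ^ p)).symm
      · rw [Set.indicator_of_notMem h]
        simp only [Set.mem_univ_pi, not_forall] at h
        obtain ⟨i, hi⟩ := h
        exact (Finset.prod_eq_zero (Finset.mem_univ i)
          (Set.indicator_of_notMem hi _)).symm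
    rw [heq, MeasureTheory.integral_fintype_prod_volume_eq_pow (ι := Fin N)
      ((Set.Ioo (0:ℝ) c).indicator (fun x => x ^ p)),
      MeasureTheory.integral_indicator measurableSet_Ioo, h1 c hc,
      Fintype.card_fin]
  have part1 : ∀ l₁ : ℝ, 0 < l₁ →
      (∫ y in Set.univ.pi (fun _ : Fin N => Set.Ioo (0:ℝ) (Λ/l₁)),
        ∏ i, (y i) ^ p) = ((Λ/l₁) ^ q / q) ^ (N:ℕ) := by
    intro l₁ hl₁
    exact hinner (Λ/l₁) (div_pos hΛ hl₁)
  set C : ℝ := (Λ ^ q / q) ^ N with hC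
  have hCpos : 0 < C := pow_pos (div_pos (Real.rpow_pos_of_pos hΛ q) hqpos) N
  have key : ∀ l₁ ∈ Set.Ioi Λ,
      l₁ ^ (-(N:ℝ)*α) *
        (∫ y in Set.univ.pi (fun _ : Fin N => Set.Ioo (0:ℝ) (Λ/l₁)),
          ∏ i, (y i) ^ p) = C * l₁ ^ (1 - 3*(N:ℝ)) := by
    intro l₁ hl₁
    have hl : 0 < l₁ := lt_trans hΛ hl₁
    rw [part1 l₁ hl]
    have e1 : (Λ/l₁) ^ q / q = Λ ^ q / q * l₁ ^ (-q) := by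
      rw [Real.div_rpow hΛ.le hl.le, Real.rpow_neg hl.le]; ring
    rw [e1, mul_pow, ← Real.rpow_natCast (l₁ ^ (-q)) N, ← Real.rpow_mul hl.le,
      ← hC]
    have e2 : l₁ ^ (-(N:ℝ)*α) * (C * l₁ ^ (-q * (N:ℕ)))
        = C * (l₁ ^ (-(N:ℝ)*α) * l₁ ^ (-q * (N:ℕ))) := by ring
    rw [e2, ← Real.rpow_add hl]
    congr 1
    rw [hqdef]; field_simp; ring
  have hexp : 1 - 3*(N:ℝ) < -1 := by linarith
  refine ⟨part1, ?_, ?_⟩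
  · exact MeasureTheory.IntegrableOn.congr_fun
      ((integrableOn_Ioi_rpow_of_lt hexp hΛ).const_mul C)
      (fun x hx => (key x hx).symm) measurableSet_Ioi
  · intro n hn hcontra
    have key2 : ∀ l₁ ∈ Set.Ioi Λ,
        l₁ ^ (n:ℝ) * (l₁ ^ (-(N:ℝ)*α) *
          ∫ y in Set.univ.pi (fun _ : Fin N => Set.Ioo (0:ℝ) (Λ/l₁)),
            ∏ i, (y i) ^ p)
        = C * l₁ ^ ((n:ℝ) + (1 - 3*(N:ℝ))) := by
      intro l₁ hl₁
      have hl : 0 < l₁ := lt_trans hΛ hl₁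
      rw [key l₁ hl₁, Real.rpow_add hl]; ring
    have h2 : IntegrableOn (fun l₁ : ℝ => C * l₁ ^ ((n:ℝ) + (1 - 3*(N:ℝ))))
        (Set.Ioi Λ) := hcontra.congr_fun key2 measurableSet_Ioi
    have h3 := h2.const_mul C⁻¹
    simp only [inv_mul_cancel_left₀ (ne_of_gt hCpos)] at h3
    have h4 : IntegrableOn (fun x : ℝ => x ^ ((n:ℝ) + (1 - 3*(N:ℝ)))) (Set.Ioi Λ) := h3
    rw [integrableOn_Ioi_rpow_iff hΛ] at h4
    linarith
end
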